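/- (Derivation of the quasilinear equation with non-local term (3.4).) Let r : ℝ → ℝ and let w : ℝ × ℝ → ℝ be C³ and satisfy w_xx(x,t) − 2·w_xt(x,t) = −r(x)·w(x,t) for all (x,t) ∈ ℝ², and w(x,0) = 1/2 for all x ∈ ℝ. Define q = w_t (the t-partial derivative of w). Then q is C² and satisfies q_xx(x,t) − 2·q_xt(x,t) + 4·q_x(x,0)·q(x,t) = 0 for all (x,t) ∈ ℝ². -/

import Mathlib

open Set

/-- Partial derivative in the first variable. -/
noncomputable def partialX (f : ℝ × ℝ → ℝ) : ℝ × ℝ → ℝ :=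
  fun p => deriv (fun x => f (x, p.2)) p.1

/-- Partial derivative in the second variable. -/
noncomputable def partialT (f : ℝ × ℝ → ℝ) : ℝ × ℝ → ℝ :=
  fun p => deriv (fun t => f (p.1, t)) p.2

lemma partialX_eq {f : ℝ × ℝ → ℝ} {p : ℝ × ℝ} (hf : DifferentiableAt ℝ f p) :
    partialX f p = fderiv ℝ f p (1, 0) := by
  have h1 : HasFDerivAt (fun x : ℝ => (x, p.2))
      ((ContinuousLinearMap.id ℝ ℝ).prod 0) p.1 :=
    (hasFDerivAt_id p.1).prodMk (hasFDerivAt_const p.2 p.1)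
  have h2 := (hf.hasFDerivAt.comp p.1 h1).hasDerivAt
  simpa [partialX, Function.comp_def] using h2.deriv

lemma partialT_eq {f : ℝ × ℝ → ℝ} {p : ℝ × ℝ} (hf : DifferentiableAt ℝ f p) :
    partialT f p = fderiv ℝ f p (0, 1) := by
  have h1 : HasFDerivAt (fun t : ℝ => (p.1, t))
      ((0 : ℝ →L[ℝ] ℝ).prod (ContinuousLinearMap.id ℝ ℝ)) p.2 :=
    (hasFDerivAt_const p.1 p.2).prodMk (hasFDerivAt_id p.2)
  have h2 := (hf.hasFDerivAt.comp p.2 h1).hasDerivAt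
  simpa [partialT, Function.comp_def] using h2.deriv

lemma contDiff_fderiv_apply {f : ℝ × ℝ → ℝ} {n : ℕ} (hf : ContDiff ℝ (n + 1) f)
    (v : ℝ × ℝ) : ContDiff ℝ n (fun p => fderiv ℝ f p v) := by
  have h := hf.fderiv_right (m := n) (by norm_cast)
  exact (ContinuousLinearMap.apply ℝ ℝ v).contDiff.comp h

lemma partialX_eq_fun {f : ℝ × ℝ → ℝ} (hf : Differentiable ℝ f) :
    partialX f = fun p => fderiv ℝ f p (1, 0) :=
  funext fun p => partialX_eq (hf p)

lemma partialT_eq_fun {f : ℝ × ℝ → ℝ} (hf : Differentiable ℝ f) :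
    partialT f = fun p => fderiv ℝ f p (0, 1) :=
  funext fun p => partialT_eq (hf p)

lemma contDiff_partialX {f : ℝ × ℝ → ℝ} {n : ℕ} (hf : ContDiff ℝ (n + 1) f) :
    ContDiff ℝ n (partialX f) := by
  rw [partialX_eq_fun (hf.differentiable (by norm_cast))]
  exact contDiff_fderiv_apply hf _

lemma contDiff_partialT {f : ℝ × ℝ → ℝ} {n : ℕ} (hf : ContDiff ℝ (n + 1) f) :
    ContDiff ℝ n (partialT f) := by
  rw [partialT_eq_fun (hf.differentiable (by norm_cast))]
  exact contDiff_fderiv_apply hf _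

lemma fderiv_fderiv_apply {f : ℝ × ℝ → ℝ} (hf : ContDiff ℝ 2 f) (p u v : ℝ × ℝ) :
    fderiv ℝ (fun q => fderiv ℝ f q v) p u = fderiv ℝ (fderiv ℝ f) p u v := by
  have hd : DifferentiableAt ℝ (fderiv ℝ f) p :=
    (hf.fderiv_right (m := 1) (by norm_num)).differentiable one_ne_zero p
  have : HasFDerivAt (fun q => fderiv ℝ f q v)
      ((ContinuousLinearMap.apply ℝ ℝ v).comp (fderiv ℝ (fderiv ℝ f) p)) p :=
    (ContinuousLinearMap.apply ℝ ℝ v).hasFDerivAt.comp p hd.hasFDerivAt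
  simp [this.fderiv]

lemma symm_second {f : ℝ × ℝ → ℝ} (hf : ContDiff ℝ 2 f) (p u v : ℝ × ℝ) :
    fderiv ℝ (fderiv ℝ f) p u v = fderiv ℝ (fderiv ℝ f) p v u :=
  hf.contDiffAt.isSymmSndFDerivAt (by simp) u v

/-- Commutation of partial derivatives for C² functions. -/
lemma partialXT_comm {f : ℝ × ℝ → ℝ} (hf : ContDiff ℝ 2 f) (p : ℝ × ℝ) :
    partialT (partialX f) p = partialX (partialT f) p := by
  have hf1 : Differentiable ℝ f := hf.differentiable two_ne_zero
  have hX : ContDiff ℝ 1 (partialX f) := contDiff_partialX (n := 1) hf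
  have hT : ContDiff ℝ 1 (partialT f) := contDiff_partialT (n := 1) hf
  rw [partialT_eq ((hX.differentiable one_ne_zero) p), partialX_eq ((hT.differentiable one_ne_zero) p),
    partialX_eq_fun hf1, partialT_eq_fun hf1, fderiv_fderiv_apply hf, fderiv_fderiv_apply hf,
    symm_second hf]

lemma sliceT_diff {f : ℝ × ℝ → ℝ} (hf : Differentiable ℝ f) (p : ℝ × ℝ) :
    DifferentiableAt ℝ (fun t => f (p.1, t)) p.2 :=
  (hf (p.1, p.2)).comp p.2 ((differentiableAt_const p.1).prodMk differentiableAt_id)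

/-- Derivation of the quasilinear equation with non-local term (3.4):
    with q = w_t one has q_xx − 2 q_xt + 4 q_x(x,0) q = 0. -/
theorem quasilinear_equation
    (r : ℝ → ℝ) (w : ℝ × ℝ → ℝ) (hw : ContDiff ℝ 3 w)
    (hpde : ∀ p : ℝ × ℝ,
      partialX (partialX w) p - 2 * partialT (partialX w) p = -(r p.1) * w p)
    (hinit : ∀ x : ℝ, w (x, 0) = 1 / 2) :
    ContDiff ℝ 2 (partialT w) ∧
    ∀ p : ℝ × ℝ,
      partialX (partialX (partialT w)) p
        - 2 * partialT (partialX (partialT w)) p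
        + 4 * partialX (partialT w) (p.1, 0) * partialT w p = 0 := by
  have hw3 : ContDiff ℝ (2 + 1) w := by norm_num at hw ⊢; exact hw
  have hw2 : ContDiff ℝ 2 w := hw3.of_le (by norm_cast)
  set A := partialX w with hAdef
  set q := partialT w with hqdef
  have hA2 : ContDiff ℝ 2 A := contDiff_partialX hw3
  have hq2 : ContDiff ℝ 2 q := contDiff_partialT hw3
  have hXA : ContDiff ℝ 1 (partialX A) := contDiff_partialX (n := 1) hA2
  have hTA : ContDiff ℝ 1 (partialT A) := contDiff_partialT (n := 1) hA2
  -- partialT A = partialX q as functions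
  have hcomm : partialT A = partialX q := funext fun p => partialXT_comm hw2 p
  -- Step 1: differentiate the PDE in t
  have step1 : ∀ p : ℝ × ℝ,
      partialT (partialX A) p - 2 * partialT (partialT A) p = -(r p.1) * q p := by
    intro p
    have h1 := sliceT_diff (hXA.differentiable one_ne_zero) p
    have h2 := sliceT_diff (hTA.differentiable one_ne_zero) p
    have h3 := sliceT_diff (hw.differentiable (by norm_num)) p
    have e : (fun t => partialX A (p.1, t) - 2 * partialT A (p.1, t))
        = fun t => -(r p.1) * w (p.1, t) := funext fun t => hpde (p.1, t)
    have := congrArg (fun g => deriv g p.2) e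
    simp only [deriv_fun_sub h1 (h2.const_mul 2), deriv_const_mul 2 h2,
      deriv_const_mul (-(r p.1)) h3] at this
    exact this
  -- rewrite in terms of q
  have star : ∀ p : ℝ × ℝ,
      partialX (partialX q) p - 2 * partialT (partialX q) p = -(r p.1) * q p := by
    intro p
    have := step1 p
    rwa [partialXT_comm hA2 p, hcomm] at this
  -- Step 2: compute r from initial data
  have hA0 : ∀ x : ℝ, A (x, 0) = 0 := by
    intro x
    have : (fun y : ℝ => w (y, 0)) = fun _ => (1 / 2 : ℝ) := funext fun y => hinit y
    simp [hAdef, partialX, this]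
  have hXA0 : ∀ x : ℝ, partialX A (x, 0) = 0 := by
    intro x
    have : (fun y : ℝ => A (y, 0)) = fun _ => (0 : ℝ) := funext fun y => hA0 y
    simp [partialX, this]
  have hr : ∀ x : ℝ, r x = 4 * partialX q (x, 0) := by
    intro x
    have h := hpde (x, 0)
    rw [show partialT (partialX w) (x, 0) = partialX q (x, 0) from partialXT_comm hw2 (x, 0)] at h
    simp only [← hAdef, hXA0 x, hinit x] at h
    linarith [h]
  refine ⟨hq2, fun p => ?_⟩
  have := star p
  rw [← hr p.1]
  linarith [this]
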